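/- For every (f, h) ∈ 𝓕 × 𝓗, the pair T(f, h) = (f̃, h̃) again belongs to 𝓕 × 𝓗: f̃ is continuous on [x_0^1, x_N^1] (in particular the piecewise definitions agree at the interior knots x_n^1, where f̃(x_n^1) = (y_n^1, z_n^1) from both sides) with f̃(x_0^1) = (y_0^1, z_0^1) and f̃(x_N^1) = (y_N^1, z_N^1), and h̃ is continuous on [x_0^2, x_M^2] with h̃(x_0^2) = (y_0^2, z_0^2) and h̃(x_M^2) = (y_M^2, z_M^2). -/

import Mathlib

open Set

lemma monoIdx (X : ℕ → ℝ) (Nn : ℕ) (hX : ∀ i, i < Nn → X i < X (i + 1)) :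
    ∀ i j, i ≤ j → j ≤ Nn → X i ≤ X j := by
  have h0 : ∀ j, j ≤ Nn → ∀ i, i ≤ j → X i ≤ X j := by
    intro j
    induction j with
    | zero => intro _ i hi; rw [Nat.le_zero.mp hi]
    | succ k ih =>
      intro hk i hi
      rcases Nat.lt_succ_iff_lt_or_eq.mp (Nat.lt_succ_of_le hi) with h | h
      · exact (ih (by omega) i (by omega)).trans (hX k (by omega)).le
      · rw [h]
  exact fun i j hij hjN => h0 j hjN i hij


lemma glueIcc {f : ℝ → ℝ × ℝ} {p q r : ℝ} (hpq : p ≤ q) (hqr : q ≤ r)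
    (h1 : ContinuousOn f (Icc p q)) (h2 : ContinuousOn f (Icc q r)) :
    ContinuousOn f (Icc p r) := by
  rw [← Icc_union_Icc_eq_Icc hpq hqr]
  intro x hx
  rcases hx with hx | hx
  · apply ContinuousWithinAt.union (h1 x hx)
    by_cases hq : x ∈ Icc q r
    · exact (h2 x hq).mono (subset_refl _)
    · exact continuousWithinAt_of_notMem_closure (by rwa [isClosed_Icc.closure_eq])
  · apply ContinuousWithinAt.union _ (h2 x hx)
    by_cases hq : x ∈ Icc p q
    · exact h1 x hq
    · exact continuousWithinAt_of_notMem_closure (by rwa [isClosed_Icc.closure_eq])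

lemma piece {ft F : ℝ → ℝ × ℝ} {p q P Q aa bb : ℝ} (hpq : p < q) (hPQ : P < Q)
    (h0 : aa * p + bb = P) (h1 : aa * q + bb = Q)
    (hF : ContinuousOn F (Icc p q))
    (heq : ∀ x ∈ Icc p q, ft (aa * x + bb) = F x) :
    ContinuousOn ft (Icc P Q) := by
  have ha : 0 < aa := by nlinarith
  have hmap : ∀ t ∈ Icc P Q, (t - bb) / aa ∈ Icc p q := by
    intro t ht
    obtain ⟨ht1, ht2⟩ := ht
    constructor
    · rw [le_div_iff₀ ha]; nlinarith
    · rw [div_le_iff₀ ha]; nlinarith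
  have key : ∀ t ∈ Icc P Q, ft t = F ((t - bb) / aa) := by
    intro t ht
    have h := heq _ (hmap t ht)
    have : aa * ((t - bb) / aa) + bb = t := by field_simp; ring
    rwa [this] at h
  apply ContinuousOn.congr _ key
  exact hF.comp (by fun_prop) hmap

lemma half
    (Nn K1 K2 : ℕ) (hK : K1 + K2 = Nn) (hNn : 1 ≤ Nn)
    (X Y Z : ℕ → ℝ) (hX : ∀ i, i < Nn → X i < X (i + 1))
    (p1 q1 p2 q2 : ℝ) (hp1 : p1 < q1) (hp2 : p2 < q2)
    (A1 B1 A2 B2 : ℕ → ℝ)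
    (G1 G2 : ℕ → ℝ → ℝ × ℝ)
    (ft : ℝ → ℝ × ℝ)
    (hG1 : ∀ n, 1 ≤ n → n ≤ K1 → ContinuousOn (G1 n) (Icc p1 q1))
    (hG2 : ∀ n, 1 ≤ n → n ≤ K2 → ContinuousOn (G2 n) (Icc p2 q2))
    (hL1 : ∀ n, 1 ≤ n → n ≤ K1 →
      A1 n * p1 + B1 n = X (n - 1) ∧ A1 n * q1 + B1 n = X n)
    (hL2 : ∀ n, 1 ≤ n → n ≤ K2 →
      A2 n * p2 + B2 n = X (K1 + n - 1) ∧ A2 n * q2 + B2 n = X (K1 + n))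
    (hE1 : ∀ n, 1 ≤ n → n ≤ K1 → ∀ x ∈ Icc p1 q1, ft (A1 n * x + B1 n) = G1 n x)
    (hE2 : ∀ n, 1 ≤ n → n ≤ K2 → ∀ x ∈ Icc p2 q2, ft (A2 n * x + B2 n) = G2 n x)
    (hV1 : ∀ n, 1 ≤ n → n ≤ K1 →
      G1 n p1 = (Y (n - 1), Z (n - 1)) ∧ G1 n q1 = (Y n, Z n))
    (hV2 : ∀ n, 1 ≤ n → n ≤ K2 →
      G2 n p2 = (Y (K1 + n - 1), Z (K1 + n - 1)) ∧ G2 n q2 = (Y (K1 + n), Z (K1 + n))) :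
    ContinuousOn ft (Icc (X 0) (X Nn)) ∧ (∀ k, k ≤ Nn → ft (X k) = (Y k, Z k)) := by
  have hmono := monoIdx X Nn hX
  have hsub : ∀ n, 1 ≤ n → n ≤ Nn → ContinuousOn ft (Icc (X (n - 1)) (X n)) := by
    intro n h1n hnN
    have hXn : X (n - 1) < X n := by
      have := hX (n - 1) (by omega)
      have e : n - 1 + 1 = n := by omega
      rwa [e] at this
    by_cases hc : n ≤ K1
    · exact piece hp1 hXn (hL1 n h1n hc).1 (hL1 n h1n hc).2 (hG1 n h1n hc) (hE1 n h1n hc)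
    · push_neg at hc
      set m := n - K1 with hm
      have hm1 : 1 ≤ m := by omega
      have hm2 : m ≤ K2 := by omega
      have e1 : K1 + m - 1 = n - 1 := by omega
      have e2 : K1 + m = n := by omega
      have hl := hL2 m hm1 hm2
      rw [e1, e2] at hl
      exact piece hp2 hXn hl.1 hl.2 (hG2 m hm1 hm2) (hE2 m hm1 hm2)
  have key1 : ∀ n, 1 ≤ n → n ≤ K1 →
      ft (X (n - 1)) = (Y (n - 1), Z (n - 1)) ∧ ft (X n) = (Y n, Z n) := by
    intro n h1n hnK
    have hp : p1 ∈ Icc p1 q1 := ⟨le_refl _, hp1.le⟩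
    have hq : q1 ∈ Icc p1 q1 := ⟨hp1.le, le_refl _⟩
    have e1 := hE1 n h1n hnK p1 hp
    have e2 := hE1 n h1n hnK q1 hq
    rw [(hL1 n h1n hnK).1, (hV1 n h1n hnK).1] at e1
    rw [(hL1 n h1n hnK).2, (hV1 n h1n hnK).2] at e2
    exact ⟨e1, e2⟩
  have key2 : ∀ n, 1 ≤ n → n ≤ K2 →
      ft (X (K1 + n - 1)) = (Y (K1 + n - 1), Z (K1 + n - 1)) ∧
      ft (X (K1 + n)) = (Y (K1 + n), Z (K1 + n)) := by
    intro n h1n hnK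
    have hp : p2 ∈ Icc p2 q2 := ⟨le_refl _, hp2.le⟩
    have hq : q2 ∈ Icc p2 q2 := ⟨hp2.le, le_refl _⟩
    have e1 := hE2 n h1n hnK p2 hp
    have e2 := hE2 n h1n hnK q2 hq
    rw [(hL2 n h1n hnK).1, (hV2 n h1n hnK).1] at e1
    rw [(hL2 n h1n hnK).2, (hV2 n h1n hnK).2] at e2
    exact ⟨e1, e2⟩
  have knots : ∀ k, k ≤ Nn → ft (X k) = (Y k, Z k) := by
    intro k hk
    by_cases hc : k ≤ K1
    · rcases Nat.eq_zero_or_pos k with h0 | h0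
      · subst h0
        rcases Nat.eq_zero_or_pos K1 with hK1z | hK1z
        · have h2 : 1 ≤ K2 := by omega
          have := (key2 1 (le_refl _) h2).1
          have e : K1 + 1 - 1 = 0 := by omega
          rwa [e] at this
        · have := (key1 1 (le_refl _) hK1z).1
          simpa using this
      · exact (key1 k h0 hc).2
    · push_neg at hc
      set m := k - K1 with hm
      have hm1 : 1 ≤ m := by omega
      have hm2 : m ≤ K2 := by omega
      have := (key2 m hm1 hm2).2
      have e : K1 + m = k := by omega
      rwa [e] at this
  refine ⟨?_, knots⟩
  have glue : ∀ k, 1 ≤ k → k ≤ Nn → ContinuousOn ft (Icc (X 0) (X k)) := by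
    intro k
    induction k with
    | zero => omega
    | succ j ih =>
      intro _ hk
      rcases Nat.eq_zero_or_pos j with hj | hj
      · subst hj
        simpa using hsub 1 (le_refl _) (by omega)
      · have h1 := ih (by omega) (by omega)
        have h2 := hsub (j + 1) (by omega) hk
        have e : j + 1 - 1 = j := by omega
        rw [e] at h2
        exact glueIcc (hmono 0 j (by omega) (by omega))
          (hmono j (j + 1) (by omega) hk) h1 h2
  exact glue Nn hNn (le_refl _)

theorem stmt_6
    (N M : ℕ) (hN : 2 ≤ N) (hM : 2 ≤ M)
    (x1 y1 z1 x2 y2 z2 : ℕ → ℝ)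
    (hx1 : ∀ i, i < N → x1 i < x1 (i + 1))
    (hx2 : ∀ j, j < M → x2 j < x2 (j + 1))
    (hstar1 : ∀ i, 1 ≤ i → i ≤ N → x1 i - x1 (i - 1) < x2 M - x2 0)
    (hstar2 : ∀ j, 1 ≤ j → j ≤ M → x2 j - x2 (j - 1) < x1 N - x1 0)
    (K : Fin 2 → Fin 2 → ℕ)
    (hK1 : K 0 0 + K 0 1 = N) (hK2 : K 1 0 + K 1 1 = M)
    (a b c d e f α β γ : Fin 2 → Fin 2 → ℕ → ℝ)
    (hα : ∀ r s n, 1 ≤ n → n ≤ K r s → |α r s n| < 1)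
    (hγ : ∀ r s n, 1 ≤ n → n ≤ K r s → |γ r s n| < 1)
    (hβγ : ∀ r s n, 1 ≤ n → n ≤ K r s → |β r s n| + |γ r s n| < 1)
    (w : Fin 2 → Fin 2 → ℕ → ℝ × ℝ × ℝ → ℝ × ℝ × ℝ)
    (hw : ∀ r s n p, w r s n p =
      (a r s n * p.1 + b r s n,
       c r s n * p.1 + α r s n * p.2.1 + β r s n * p.2.2 + d r s n,
       e r s n * p.1 + γ r s n * p.2.2 + f r s n))
    (hj11 : ∀ n, 1 ≤ n → n ≤ K 0 0 →
      w 0 0 n (x1 0, y1 0, z1 0) = (x1 (n - 1), y1 (n - 1), z1 (n - 1)) ∧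
      w 0 0 n (x1 N, y1 N, z1 N) = (x1 n, y1 n, z1 n))
    (hj12 : ∀ n, 1 ≤ n → n ≤ K 0 1 →
      w 0 1 n (x2 0, y2 0, z2 0) =
        (x1 (K 0 0 + n - 1), y1 (K 0 0 + n - 1), z1 (K 0 0 + n - 1)) ∧
      w 0 1 n (x2 M, y2 M, z2 M) = (x1 (K 0 0 + n), y1 (K 0 0 + n), z1 (K 0 0 + n)))
    (hj21 : ∀ n, 1 ≤ n → n ≤ K 1 0 →
      w 1 0 n (x1 0, y1 0, z1 0) = (x2 (n - 1), y2 (n - 1), z2 (n - 1)) ∧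
      w 1 0 n (x1 N, y1 N, z1 N) = (x2 n, y2 n, z2 n))
    (hj22 : ∀ n, 1 ≤ n → n ≤ K 1 1 →
      w 1 1 n (x2 0, y2 0, z2 0) =
        (x2 (K 1 0 + n - 1), y2 (K 1 0 + n - 1), z2 (K 1 0 + n - 1)) ∧
      w 1 1 n (x2 M, y2 M, z2 M) = (x2 (K 1 0 + n), y2 (K 1 0 + n), z2 (K 1 0 + n)))
    (u v ft ht : ℝ → ℝ × ℝ)
    (hu : (ContinuousOn u (Set.Icc (x1 0) (x1 N)) ∧ u (x1 0) = (y1 0, z1 0) ∧ u (x1 N) = (y1 N, z1 N)))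
    (hv : (ContinuousOn v (Set.Icc (x2 0) (x2 M)) ∧ v (x2 0) = (y2 0, z2 0) ∧ v (x2 M) = (y2 M, z2 M)))
    (hEQ : (∀ n, 1 ≤ n → n ≤ K 0 0 → ∀ x ∈ Set.Icc (x1 0) (x1 N),
      ft (a 0 0 n * x + b 0 0 n) =
        (c 0 0 n * x + α 0 0 n * (u x).1 + β 0 0 n * (u x).2 + d 0 0 n,
         e 0 0 n * x + γ 0 0 n * (u x).2 + f 0 0 n)) ∧
    (∀ n, 1 ≤ n → n ≤ K 0 1 → ∀ x ∈ Set.Icc (x2 0) (x2 M),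
      ft (a 0 1 n * x + b 0 1 n) =
        (c 0 1 n * x + α 0 1 n * (v x).1 + β 0 1 n * (v x).2 + d 0 1 n,
         e 0 1 n * x + γ 0 1 n * (v x).2 + f 0 1 n)) ∧
    (∀ n, 1 ≤ n → n ≤ K 1 0 → ∀ x ∈ Set.Icc (x1 0) (x1 N),
      ht (a 1 0 n * x + b 1 0 n) =
        (c 1 0 n * x + α 1 0 n * (u x).1 + β 1 0 n * (u x).2 + d 1 0 n,
         e 1 0 n * x + γ 1 0 n * (u x).2 + f 1 0 n)) ∧
    (∀ n, 1 ≤ n → n ≤ K 1 1 → ∀ x ∈ Set.Icc (x2 0) (x2 M),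
      ht (a 1 1 n * x + b 1 1 n) =
        (c 1 1 n * x + α 1 1 n * (v x).1 + β 1 1 n * (v x).2 + d 1 1 n,
         e 1 1 n * x + γ 1 1 n * (v x).2 + f 1 1 n))) :
    (ContinuousOn ft (Set.Icc (x1 0) (x1 N)) ∧ ft (x1 0) = (y1 0, z1 0) ∧ ft (x1 N) = (y1 N, z1 N)) ∧
    (ContinuousOn ht (Set.Icc (x2 0) (x2 M)) ∧ ht (x2 0) = (y2 0, z2 0) ∧ ht (x2 M) = (y2 M, z2 M)) ∧
    (∀ n, n ≤ N → ft (x1 n) = (y1 n, z1 n)) ∧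
    (∀ m, m ≤ M → ht (x2 m) = (y2 m, z2 m)) := by
  obtain ⟨hu1, hu2, hu3⟩ := hu
  obtain ⟨hv1, hv2, hv3⟩ := hv
  obtain ⟨E11, E12, E21, E22⟩ := hEQ
  have hp1 : x1 0 < x1 N :=
    lt_of_lt_of_le (hx1 0 (by omega)) (monoIdx x1 N hx1 1 N (by omega) le_rfl)
  have hp2 : x2 0 < x2 M :=
    lt_of_lt_of_le (hx2 0 (by omega)) (monoIdx x2 M hx2 1 M (by omega) le_rfl)
  have hGcont : ∀ (g : ℝ → ℝ × ℝ) (s : Set ℝ) (C A B D E G F : ℝ),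
      ContinuousOn g s →
      ContinuousOn (fun x => (C * x + A * (g x).1 + B * (g x).2 + D,
        E * x + G * (g x).2 + F)) s := by
    intro g s C A B D E G F hg
    apply ContinuousOn.prodMk
    · exact (((continuousOn_const.mul continuousOn_id).add
        (continuousOn_const.mul hg.fst)).add
        (continuousOn_const.mul hg.snd)).add continuousOn_const
    · exact ((continuousOn_const.mul continuousOn_id).add
        (continuousOn_const.mul hg.snd)).add continuousOn_const
  -- first half : ft
  have Hft := half N (K 0 0) (K 0 1) hK1 (by omega) x1 y1 z1 hx1
    (x1 0) (x1 N) (x2 0) (x2 M) hp1 hp2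
    (a 0 0) (b 0 0) (a 0 1) (b 0 1)
    (fun n x => (c 0 0 n * x + α 0 0 n * (u x).1 + β 0 0 n * (u x).2 + d 0 0 n,
      e 0 0 n * x + γ 0 0 n * (u x).2 + f 0 0 n))
    (fun n x => (c 0 1 n * x + α 0 1 n * (v x).1 + β 0 1 n * (v x).2 + d 0 1 n,
      e 0 1 n * x + γ 0 1 n * (v x).2 + f 0 1 n))
    ft
    (fun n _ _ => hGcont u _ _ _ _ _ _ _ _ hu1)
    (fun n _ _ => hGcont v _ _ _ _ _ _ _ _ hv1)
    (by
      intro n h1 h2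
      have J := hj11 n h1 h2
      rw [hw, hw] at J
      simp only [Prod.mk.injEq] at J
      exact ⟨J.1.1, J.2.1⟩)
    (by
      intro n h1 h2
      have J := hj12 n h1 h2
      rw [hw, hw] at J
      simp only [Prod.mk.injEq] at J
      exact ⟨J.1.1, J.2.1⟩)
    E11 E12
    (by
      intro n h1 h2
      have J := hj11 n h1 h2
      rw [hw, hw] at J
      simp only [Prod.mk.injEq] at J
      simp only [hu2, hu3, Prod.mk.injEq]
      exact ⟨⟨J.1.2.1, J.1.2.2⟩, ⟨J.2.2.1, J.2.2.2⟩⟩)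
    (by
      intro n h1 h2
      have J := hj12 n h1 h2
      rw [hw, hw] at J
      simp only [Prod.mk.injEq] at J
      simp only [hv2, hv3, Prod.mk.injEq]
      exact ⟨⟨J.1.2.1, J.1.2.2⟩, ⟨J.2.2.1, J.2.2.2⟩⟩)
  -- second half : ht
  have Hht := half M (K 1 0) (K 1 1) hK2 (by omega) x2 y2 z2 hx2
    (x1 0) (x1 N) (x2 0) (x2 M) hp1 hp2
    (a 1 0) (b 1 0) (a 1 1) (b 1 1)
    (fun n x => (c 1 0 n * x + α 1 0 n * (u x).1 + β 1 0 n * (u x).2 + d 1 0 n,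
      e 1 0 n * x + γ 1 0 n * (u x).2 + f 1 0 n))
    (fun n x => (c 1 1 n * x + α 1 1 n * (v x).1 + β 1 1 n * (v x).2 + d 1 1 n,
      e 1 1 n * x + γ 1 1 n * (v x).2 + f 1 1 n))
    ht
    (fun n _ _ => hGcont u _ _ _ _ _ _ _ _ hu1)
    (fun n _ _ => hGcont v _ _ _ _ _ _ _ _ hv1)
    (by
      intro n h1 h2
      have J := hj21 n h1 h2
      rw [hw, hw] at J
      simp only [Prod.mk.injEq] at J
      exact ⟨J.1.1, J.2.1⟩)
    (by
      intro n h1 h2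
      have J := hj22 n h1 h2
      rw [hw, hw] at J
      simp only [Prod.mk.injEq] at J
      exact ⟨J.1.1, J.2.1⟩)
    E21 E22
    (by
      intro n h1 h2
      have J := hj21 n h1 h2
      rw [hw, hw] at J
      simp only [Prod.mk.injEq] at J
      simp only [hu2, hu3, Prod.mk.injEq]
      exact ⟨⟨J.1.2.1, J.1.2.2⟩, ⟨J.2.2.1, J.2.2.2⟩⟩)
    (by
      intro n h1 h2
      have J := hj22 n h1 h2
      rw [hw, hw] at J
      simp only [Prod.mk.injEq] at J
      simp only [hv2, hv3, Prod.mk.injEq]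
      exact ⟨⟨J.1.2.1, J.1.2.2⟩, ⟨J.2.2.1, J.2.2.2⟩⟩)
  exact ⟨⟨Hft.1, Hft.2 0 (by omega), Hft.2 N le_rfl⟩,
    ⟨Hht.1, Hht.2 0 (by omega), Hht.2 M le_rfl⟩, Hft.2, Hht.2⟩
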